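/- Let (X, ≤₁, ≤₂) be an FM frame. For any refined regular open set Y ∈ RO₁₂(X), Y equals the join in RO₁₂(X) of the refined regular open closures of its singletons: Y = ⋁_{RO₁₂}{c({x}) | x ∈ Y}, where the join of a family in RO₁₂(X) is I₁C₂ applied to its union. Consequently {c({x}) | x ∈ X} is join-dense in RO₁₂(X). -/

import Mathlib

/-- `I₁C₂` for the Alexandroff upset topologies of an FM frame. -/
def fmIC {X : Type*} (le1 le2 : X → X → Prop) (A : Set X) : Set X :=
  {x | ∀ y, le1 x y → ∃ z, le2 y z ∧ z ∈ A}

/-- The `≤₁`-upward closure. -/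
def fmUp1 {X : Type*} (le1 : X → X → Prop) (Y : Set X) : Set X :=
  {x | ∃ y ∈ Y, le1 y x}

lemma fmIC_mono {X : Type*} (le1 le2 : X → X → Prop) {A B : Set X} (h : A ⊆ B) :
    fmIC le1 le2 A ⊆ fmIC le1 le2 B := by
  intro x hx y hxy
  obtain ⟨z, hz, hzA⟩ := hx y hxy
  exact ⟨z, hz, h hzA⟩

lemma fmIC_upset {X : Type*} (le1 le2 : X → X → Prop) [IsPartialOrder X le1]
    {A : Set X} {x x' : X} (hx : x ∈ fmIC le1 le2 A) (h : le1 x x') :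
    x' ∈ fmIC le1 le2 A := fun y hy => hx y (Trans.trans h hy)

lemma fm_mem_c {X : Type*} (le1 le2 : X → X → Prop) [IsPartialOrder X le2]
    (x : X) : x ∈ fmIC le1 le2 (fmUp1 le1 {x}) :=
  fun y hxy => ⟨y, refl_of le2 y, ⟨x, rfl, hxy⟩⟩

theorem fm_singleton_closures_join_dense {X : Type*} (le1 le2 : X → X → Prop)
    [IsPartialOrder X le1] [IsPartialOrder X le2]
    (hsub : ∀ x y, le2 x y → le1 x y)
    (Y : Set X) (hY : Y = fmIC le1 le2 Y) :
    Y = fmIC le1 le2 (⋃ x ∈ Y, fmIC le1 le2 (fmUp1 le1 {x})) ∧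
    Y = fmIC le1 le2
        (⋃₀ {Z : Set X | (∃ x : X, Z = fmIC le1 le2 (fmUp1 le1 {x})) ∧ Z ⊆ Y}) := by
  -- key: I₁C₂(↑₁ Y) ⊆ Y
  have hkey : fmIC le1 le2 (fmUp1 le1 Y) ⊆ Y := by
    intro x hx
    rw [hY]
    intro y hxy
    obtain ⟨z, hz, w, hwY, hwz⟩ := hx y hxy
    refine ⟨z, hz, ?_⟩
    rw [hY]
    exact fmIC_upset le1 le2 (hY ▸ hwY) hwz
  -- for x ∈ Y, c({x}) ⊆ Y
  have hcx : ∀ x ∈ Y, fmIC le1 le2 (fmUp1 le1 {x}) ⊆ Y := by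
    intro x hxY
    refine subset_trans (fmIC_mono le1 le2 ?_) hkey
    rintro z ⟨w, hw, hwz⟩
    cases hw
    exact ⟨_, hxY, hwz⟩
  constructor
  · apply Set.Subset.antisymm
    · have hsubU : Y ⊆ ⋃ x ∈ Y, fmIC le1 le2 (fmUp1 le1 {x}) :=
        fun x hx => Set.mem_biUnion hx (fm_mem_c le1 le2 x)
      intro x hx
      exact fmIC_mono le1 le2 hsubU (hY ▸ hx)
    · have hU : (⋃ x ∈ Y, fmIC le1 le2 (fmUp1 le1 {x})) ⊆ Y := by
        intro z hz
        obtain ⟨x, hxY, hzx⟩ := Set.mem_iUnion₂.1 hz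
        exact hcx x hxY hzx
      intro x hx
      rw [hY]
      exact fmIC_mono le1 le2 hU hx
  · apply Set.Subset.antisymm
    · have hsubU : Y ⊆ ⋃₀ {Z : Set X | (∃ x : X, Z = fmIC le1 le2 (fmUp1 le1 {x})) ∧ Z ⊆ Y} :=
        fun x hx => ⟨fmIC le1 le2 (fmUp1 le1 {x}), ⟨⟨x, rfl⟩, hcx x hx⟩, fm_mem_c le1 le2 x⟩
      intro x hx
      exact fmIC_mono le1 le2 hsubU (hY ▸ hx)
    · have hU : ⋃₀ {Z : Set X | (∃ x : X, Z = fmIC le1 le2 (fmUp1 le1 {x})) ∧ Z ⊆ Y} ⊆ Y := by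
        rintro z ⟨Z, ⟨_, hZY⟩, hzZ⟩
        exact hZY hzZ
      intro x hx
      rw [hY]
      exact fmIC_mono le1 le2 hU hx
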